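/- (Necessity of the collapsing condition.) With notation as in the balancing condition: if for every subset I ⊆ {1,…,m}, every unit vector e, and every t > 0, the split network cost Σ_{i∈I} w(t_i)‖p_i − te‖ + w(Σ_{i=1}^m t_i)·t + Σ_{i∉I} w(t_i)‖p_i‖ + w(Σ_{i=1}^m t_i)‖q‖ is at least the star cost Σ_{i=1}^m w(t_i)‖p_i‖ + w(Σ_{i=1}^m t_i)‖q‖, then ‖Σ_{i∈I} w(t_i) p_i*‖* ≤ w(Σ_{i=1}^m t_i) for all I ⊆ {1,…,m}. -/

import Mathlib

open scoped BigOperators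

noncomputable def dualNorm {n : ℕ} (N : EuclideanSpace ℝ (Fin n) → ℝ)
    (z : EuclideanSpace ℝ (Fin n)) : ℝ :=
  sSup ((fun x => (inner ℝ z x : ℝ)) '' {x | N x ≤ 1})

def IsNorm {n : ℕ} (N : EuclideanSpace ℝ (Fin n) → ℝ) : Prop :=
  (∀ x, 0 ≤ N x) ∧ (∀ x, N x = 0 ↔ x = 0) ∧
  (∀ (a : ℝ) (x : EuclideanSpace ℝ (Fin n)), N (a • x) = |a| * N x) ∧
  (∀ x y, N (x + y) ≤ N x + N y)

/-- Necessity of the collapsing condition at a Steiner point of a minimum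
Gilbert arborescence star. -/
theorem collapsing_necessary {n m : ℕ} (N : EuclideanSpace ℝ (Fin n) → ℝ)
    (hN : IsNorm N)
    (hsmooth : ∀ x : EuclideanSpace ℝ (Fin n), x ≠ 0 → DifferentiableAt ℝ N x)
    (p : Fin m → EuclideanSpace ℝ (Fin n)) (q : EuclideanSpace ℝ (Fin n))
    (hp : ∀ i, p i ≠ 0) (hq : q ≠ 0)
    (t : Fin m → ℝ) (ht : ∀ i, 0 < t i) (w : ℝ → ℝ) (hw : ∀ s, 0 ≤ w s)
    (ps : Fin m → EuclideanSpace ℝ (Fin n))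
    (hps : ∀ i, (inner ℝ (ps i) (p i) : ℝ) = N (p i) ∧ dualNorm N (ps i) = 1)
    (hsplit : ∀ (I : Finset (Fin m)) (e : EuclideanSpace ℝ (Fin n)) (τ : ℝ),
      N e = 1 → 0 < τ →
        ∑ i, w (t i) * N (p i) + w (∑ i, t i) * N q ≤
          ∑ i ∈ I, w (t i) * N (p i - τ • e) + w (∑ i, t i) * τ +
            ∑ i ∈ Iᶜ, w (t i) * N (p i) + w (∑ i, t i) * N q) :
    ∀ I : Finset (Fin m),
      dualNorm N (∑ i ∈ I, w (t i) • ps i) ≤ w (∑ i, t i) := by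
  intro I
  set W := w (∑ i, t i) with hWdef
  have hW0 : 0 ≤ W := hw _
  have hN0 : N 0 = 0 := (hN.2.1 0).2 rfl
  -- Step 1: ⟪ps i, y⟫ ≤ N y for all y.
  have key : ∀ (i : Fin m) (y : EuclideanSpace ℝ (Fin n)),
      (inner ℝ (ps i) y : ℝ) ≤ N y := by
    intro i y
    rcases eq_or_ne y 0 with rfl | hy
    · simp [hN0]
    · have hNy : 0 < N y :=
        lt_of_le_of_ne (hN.1 y) (fun h => hy ((hN.2.1 y).1 h.symm))
      set x : EuclideanSpace ℝ (Fin n) := (N y)⁻¹ • y with hx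
      have hNx : N x ≤ 1 := by
        rw [hx, hN.2.2.1, abs_of_nonneg (inv_nonneg.2 hNy.le),
          inv_mul_cancel₀ hNy.ne']
      have hmem : (inner ℝ (ps i) x : ℝ) ∈
          ((fun x => (inner ℝ (ps i) x : ℝ)) '' {x | N x ≤ 1}) := ⟨x, hNx, rfl⟩
      by_cases hbdd : BddAbove ((fun x => (inner ℝ (ps i) x : ℝ)) '' {x | N x ≤ 1})
      · have h1 : (inner ℝ (ps i) x : ℝ) ≤ 1 := by
          have h := le_csSup hbdd hmem
          rw [show sSup ((fun x => (inner ℝ (ps i) x : ℝ)) '' {x | N x ≤ 1}) =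
            dualNorm N (ps i) from rfl, (hps i).2] at h
          exact h
        have h2 : (inner ℝ (ps i) x : ℝ) = (N y)⁻¹ * (inner ℝ (ps i) y : ℝ) :=
          real_inner_smul_right _ _ _
        rw [h2] at h1
        calc (inner ℝ (ps i) y : ℝ)
            = N y * ((N y)⁻¹ * (inner ℝ (ps i) y : ℝ)) := by field_simp
          _ ≤ N y * 1 := mul_le_mul_of_nonneg_left h1 hNy.le
          _ = N y := mul_one _
      · exfalso
        have h3 := Real.sSup_of_not_bddAbove hbdd
        have h4 := (hps i).2
        rw [dualNorm, h3] at h4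
        norm_num at h4
  -- Step 2: ⟪ps i, y⟫ ≤ (fderiv ℝ N (p i)) y for all y.
  have hderiv : ∀ (i : Fin m) (y : EuclideanSpace ℝ (Fin n)),
      (inner ℝ (ps i) y : ℝ) ≤ (fderiv ℝ N (p i)) y := by
    intro i y
    have hd : HasFDerivAt N (fderiv ℝ N (p i)) (p i) :=
      (hsmooth (p i) (hp i)).hasFDerivAt
    have hc : HasDerivAt (fun τ : ℝ => p i + τ • y) y 0 := by
      simpa using ((hasDerivAt_id (0 : ℝ)).smul_const y).const_add (p i)
    have hcomp : HasDerivAt (fun τ : ℝ => N (p i + τ • y))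
        ((fderiv ℝ N (p i)) y) 0 := by
      have hd' : HasFDerivAt N (fderiv ℝ N (p i))
          ((fun τ : ℝ => p i + τ • y) 0) := by simpa using hd
      have h := hd'.comp_hasDerivAt (x := (0 : ℝ)) hc
      exact h
    have hslope := hasDerivAt_iff_tendsto_slope.1 hcomp
    have hslope' : Filter.Tendsto (slope (fun τ : ℝ => N (p i + τ • y)) 0)
        (nhdsWithin 0 (Set.Ioi 0)) (nhds ((fderiv ℝ N (p i)) y)) :=
      hslope.mono_left (nhdsWithin_mono _ (fun τ hτ => ne_of_gt hτ))
    refine ge_of_tendsto hslope' ?_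
    filter_upwards [self_mem_nhdsWithin] with τ hτ
    have hτ0 : (0:ℝ) < τ := hτ
    have hlow : N (p i) + τ * (inner ℝ (ps i) y : ℝ) ≤ N (p i + τ • y) := by
      have h := key i (p i + τ • y)
      rw [inner_add_right, real_inner_smul_right, (hps i).1] at h
      linarith
    rw [slope_def_field]
    simp only [zero_smul, add_zero, sub_zero]
    rw [le_div_iff₀ hτ0]
    linarith [hlow]
  -- Step 3: for every unit vector e, ∑_{i∈I} w(t i) * (fderiv N (p i)) e ≤ W.
  have main : ∀ e : EuclideanSpace ℝ (Fin n), N e = 1 →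
      ∑ i ∈ I, w (t i) * (fderiv ℝ N (p i)) e ≤ W := by
    intro e he
    -- difference-quotient bound from hsplit
    have hquot : ∀ τ : ℝ, 0 < τ →
        ∑ i ∈ I, w (t i) * ((N (p i) - N (p i - τ • e)) / τ) ≤ W := by
      intro τ hτ
      have h := hsplit I e τ he hτ
      have hsum : ∑ i ∈ I, w (t i) * N (p i) + ∑ i ∈ Iᶜ, w (t i) * N (p i)
          = ∑ i, w (t i) * N (p i) := Finset.sum_add_sum_compl I _
      have h2 : ∑ i ∈ I, w (t i) * (N (p i) - N (p i - τ • e)) ≤ W * τ := by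
        simp only [mul_sub, Finset.sum_sub_distrib] at *
        linarith
      rw [show ∑ i ∈ I, w (t i) * ((N (p i) - N (p i - τ • e)) / τ)
          = (∑ i ∈ I, w (t i) * (N (p i) - N (p i - τ • e))) / τ by
        rw [Finset.sum_div]; exact Finset.sum_congr rfl fun i _ => by ring]
      rw [div_le_iff₀ hτ]
      linarith [h2]
    -- limit of the difference quotients
    have hlim : Filter.Tendsto
        (fun τ : ℝ => ∑ i ∈ I, w (t i) * ((N (p i) - N (p i - τ • e)) / τ))
        (nhdsWithin 0 (Set.Ioi 0))
        (nhds (∑ i ∈ I, w (t i) * (fderiv ℝ N (p i)) e)) := by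
      refine tendsto_finset_sum _ fun i _ => ?_
      have hd : HasFDerivAt N (fderiv ℝ N (p i)) (p i) :=
        (hsmooth (p i) (hp i)).hasFDerivAt
      have hc : HasDerivAt (fun τ : ℝ => p i - τ • e) (-e) 0 := by
        simpa [sub_eq_add_neg] using
          (((hasDerivAt_id (0 : ℝ)).smul_const e).const_sub (p i))
      have hcomp : HasDerivAt (fun τ : ℝ => N (p i - τ • e))
          ((fderiv ℝ N (p i)) (-e)) 0 := by
        have hd' : HasFDerivAt N (fderiv ℝ N (p i))
            ((fun τ : ℝ => p i - τ • e) 0) := by simpa using hd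
        have h := hd'.comp_hasDerivAt (x := (0 : ℝ)) hc
        exact h
      have hslope := hasDerivAt_iff_tendsto_slope.1 hcomp
      have hslope' : Filter.Tendsto (slope (fun τ : ℝ => N (p i - τ • e)) 0)
          (nhdsWithin 0 (Set.Ioi 0)) (nhds ((fderiv ℝ N (p i)) (-e))) :=
        hslope.mono_left (nhdsWithin_mono _ (fun τ hτ => ne_of_gt hτ))
      have hneg := hslope'.neg
      have heq : ∀ τ ∈ Set.Ioi (0:ℝ),
          -(slope (fun τ : ℝ => N (p i - τ • e)) 0 τ)
            = (N (p i) - N (p i - τ • e)) / τ := by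
        intro τ hτ
        rw [slope_def_field]
        simp only [zero_smul, sub_zero]
        ring
      have hneg' : Filter.Tendsto
          (fun τ : ℝ => (N (p i) - N (p i - τ • e)) / τ)
          (nhdsWithin 0 (Set.Ioi 0)) (nhds (-((fderiv ℝ N (p i)) (-e)))) := by
        refine hneg.congr' ?_
        filter_upwards [self_mem_nhdsWithin] with τ hτ using heq τ hτ
      have : -((fderiv ℝ N (p i)) (-e)) = (fderiv ℝ N (p i)) e := by
        rw [map_neg, neg_neg]
      rw [this] at hneg'
      exact hneg'.const_mul _
    refine le_of_tendsto hlim ?_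
    filter_upwards [self_mem_nhdsWithin] with τ hτ using hquot τ hτ
  -- Step 4: combine.
  set z := ∑ i ∈ I, w (t i) • ps i with hz
  have hinner : ∀ y : EuclideanSpace ℝ (Fin n),
      (inner ℝ z y : ℝ) = ∑ i ∈ I, w (t i) * (inner ℝ (ps i) y : ℝ) := by
    intro y
    rw [hz, sum_inner]
    exact Finset.sum_congr rfl fun i _ => real_inner_smul_left _ _ _
  have hunit : ∀ e : EuclideanSpace ℝ (Fin n), N e = 1 →
      (inner ℝ z e : ℝ) ≤ W := by
    intro e he
    rw [hinner e]
    refine le_trans (Finset.sum_le_sum fun i _ =>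
      mul_le_mul_of_nonneg_left (hderiv i e) (hw _)) (main e he)
  refine Real.sSup_le ?_ hW0
  rintro v ⟨x, hx, rfl⟩
  rcases eq_or_ne x 0 with rfl | hx0
  · simpa using hW0
  · have hNx : 0 < N x :=
      lt_of_le_of_ne (hN.1 x) (fun h => hx0 ((hN.2.1 x).1 h.symm))
    set e : EuclideanSpace ℝ (Fin n) := (N x)⁻¹ • x with hedef
    have hNe : N e = 1 := by
      rw [hedef, hN.2.2.1, abs_of_nonneg (inv_nonneg.2 hNx.le),
        inv_mul_cancel₀ hNx.ne']
    have h1 : (inner ℝ z e : ℝ) ≤ W := hunit e hNe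
    have h2 : (inner ℝ z e : ℝ) = (N x)⁻¹ * (inner ℝ z x : ℝ) :=
      real_inner_smul_right _ _ _
    have h3 : (inner ℝ z x : ℝ) = N x * (inner ℝ z e : ℝ) := by
      rw [h2]; field_simp
    show (inner ℝ z x : ℝ) ≤ W
    rw [h3]
    have hx1 : N x ≤ 1 := hx
    nlinarith [hNx.le, hx1, h1, hW0]
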